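/- CN EXIT function tends to 1 at the all-ones point: Let δ be a check-node type whose local code (the row space of an h_δ × s_δ generator matrix G_δ over GF(2) of rank h_δ) has minimum Hamming weight at least 2, with coordinates typed by E. Then for every e ∈ E with s_{δ,e} > 0, I_{EC,e}^{(δ)}(I) → 1 as I → (1,…,1); equivalently, I_{EC,e}^{(δ)}((1,…,1)) = 1. -/

import Mathlib

open scoped Classical

noncomputable section

namespace MET

/-- Hamming weight of a binary vector. -/
def hWeight {m : ℕ} (x : Fin m → ZMod 2) : ℕ :=
  (Finset.univ.filter fun i => x i ≠ 0).card

/-- The row space of `G` (the local code) has minimum Hamming weight at least 2. -/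
def HasMinDistGE2 {k q : ℕ} (G : Matrix (Fin k) (Fin q) (ZMod 2)) : Prop :=
  ∀ x : Fin k → ZMod 2, Matrix.vecMul x G ≠ 0 → 2 ≤ hWeight (Matrix.vecMul x G)

/-- The row space of `G` has minimum Hamming weight exactly 2. -/
def HasMinDistEq2 {k q : ℕ} (G : Matrix (Fin k) (Fin q) (ZMod 2)) : Prop :=
  HasMinDistGE2 G ∧ ∃ x : Fin k → ZMod 2, hWeight (Matrix.vecMul x G) = 2

/-- The weight-2 vector supported on `{i,j}`. -/
def wt2vec {q : ℕ} (i j : Fin q) : Fin q → ZMod 2 :=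
  fun r => if r = i ∨ r = j then 1 else 0

/-- Number of columns of edge type `l`. -/
def colCount {q n : ℕ} (τ : Fin q → Fin n) (l : Fin n) : ℕ :=
  (Finset.univ.filter fun j => τ j = l).card

/-- Rank of the matrix formed by the columns of `G` indexed by `A` together with the columns
of the `k × k` identity matrix indexed by `T`. -/
def colRank {k q : ℕ} (G : Matrix (Fin k) (Fin q) (ZMod 2))
    (A : Finset (Fin q)) (T : Finset (Fin k)) : ℕ :=
  Matrix.rank (Matrix.of fun (i : Fin k) (j : {x // x ∈ A} ⊕ {x // x ∈ T}) =>
    Sum.elim (fun a => G i a.1) (fun t => if i = t.1 then (1 : ZMod 2) else 0) j)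

/-- Multi-type split information function `ẽ_{g;u}` of a VN generator matrix. -/
def eTilde {n k q : ℕ} (G : Matrix (Fin k) (Fin q) (ZMod 2)) (τ : Fin q → Fin n)
    (g : Fin n → ℕ) (u : ℕ) : ℕ :=
  ∑ A ∈ Finset.univ.filter (fun A : Finset (Fin q) =>
      ∀ l, (A.filter fun j => τ j = l).card = g l),
    ∑ T ∈ Finset.univ.filter (fun T : Finset (Fin k) => T.card = u),
      colRank G A T

/-- Multi-type information function `ẽ_g` of a CN generator matrix. -/
def eTildeC {n h s : ℕ} (G : Matrix (Fin h) (Fin s) (ZMod 2)) (τ : Fin s → Fin n)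
    (g : Fin n → ℕ) : ℕ :=
  ∑ A ∈ Finset.univ.filter (fun A : Finset (Fin s) =>
      ∀ l, (A.filter fun j => τ j = l).card = g l),
    colRank G A ∅

/-- `χ_{2,u}(l,m)`: ordered pairs of distinct columns of types `l,m` supporting a weight-2
codeword generated by a weight-`u` input word. -/
def chi2 {n k q : ℕ} (G : Matrix (Fin k) (Fin q) (ZMod 2)) (τ : Fin q → Fin n)
    (u : ℕ) (l m : Fin n) : ℕ :=
  (Finset.univ.filter fun p : Fin q × Fin q =>
    p.1 ≠ p.2 ∧ τ p.1 = l ∧ τ p.2 = m ∧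
      ∃ x : Fin k → ZMod 2, hWeight x = u ∧ Matrix.vecMul x G = wt2vec p.1 p.2).card

/-- `ξ_2(l,m)`: ordered pairs of distinct coordinates of types `l,m` supporting a weight-2
codeword of the row space. -/
def xi2 {n h s : ℕ} (G : Matrix (Fin h) (Fin s) (ZMod 2)) (τ : Fin s → Fin n)
    (l m : Fin n) : ℕ :=
  (Finset.univ.filter fun p : Fin s × Fin s =>
    p.1 ≠ p.2 ∧ τ p.1 = l ∧ τ p.2 = m ∧
      ∃ x : Fin h → ZMod 2, Matrix.vecMul x G = wt2vec p.1 p.2).card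

/-- Range of the tuple `t`: `0 ≤ t l ≤ q l` for `l ≠ e` and `0 ≤ t e ≤ q e - 1`. -/
def tRange {n : ℕ} (q : Fin n → ℕ) (e : Fin n) : Finset (Fin n → ℕ) :=
  Fintype.piFinset fun l => Finset.range (if l = e then q l else q l + 1)

/-- The coefficient `a^{(γ,e)}_{t,z}` of the VN EXIT function. -/
def aVN {n k q : ℕ} (G : Matrix (Fin k) (Fin q) (ZMod 2)) (τ : Fin q → Fin n)
    (e : Fin n) (t : Fin n → ℕ) (z : ℕ) : ℝ :=
  ((colCount τ e - t e : ℕ) : ℝ) *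
      (eTilde G τ (fun l => colCount τ l - t l) (k - z) : ℝ)
    - ((t e + 1 : ℕ) : ℝ) *
      (eTilde G τ (fun l => colCount τ l - t l - (if l = e then 1 else 0)) (k - z) : ℝ)

/-- The coefficient `a^{(δ,e)}_{t}` of the CN EXIT function. -/
def aCN {n h s : ℕ} (G : Matrix (Fin h) (Fin s) (ZMod 2)) (τ : Fin s → Fin n)
    (e : Fin n) (t : Fin n → ℕ) : ℝ :=
  ((colCount τ e - t e : ℕ) : ℝ) *
      (eTildeC G τ (fun l => colCount τ l - t l) : ℝ)
    - ((t e + 1 : ℕ) : ℝ) *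
      (eTildeC G τ (fun l => colCount τ l - t l - (if l = e then 1 else 0)) : ℝ)

/-- Per-type VN EXIT function `I_{EV,e}^{(γ)}(I, ε)`. -/
def IEV {n k q : ℕ} (G : Matrix (Fin k) (Fin q) (ZMod 2)) (τ : Fin q → Fin n)
    (e : Fin n) (I : Fin n → ℝ) (ε : ℝ) : ℝ :=
  1 - (1 / (colCount τ e : ℝ)) *
    ∑ z ∈ Finset.range (k + 1), ε ^ z * (1 - ε) ^ (k - z) *
      ∑ t ∈ tRange (colCount τ) e,
        (∏ l, (1 - I l) ^ t l * (I l) ^ (colCount τ l - t l - (if l = e then 1 else 0))) *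
          aVN G τ e t z

/-- Per-type CN EXIT function `I_{EC,e}^{(δ)}(I)`. -/
def IEC {n h s : ℕ} (G : Matrix (Fin h) (Fin s) (ZMod 2)) (τ : Fin s → Fin n)
    (e : Fin n) (I : Fin n → ℝ) : ℝ :=
  1 - (1 / (colCount τ e : ℝ)) *
    ∑ t ∈ tRange (colCount τ) e,
      (∏ l, (1 - I l) ^ t l * (I l) ^ (colCount τ l - t l - (if l = e then 1 else 0))) *
        aCN G τ e t

/-- A variable node type: a `k × q` generator matrix over `GF(2)` with a typing of its
columns by edge types (no punctured bits). -/
structure VNType (n : ℕ) where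
  k : ℕ
  q : ℕ
  G : Matrix (Fin k) (Fin q) (ZMod 2)
  τ : Fin q → Fin n

/-- A check node type: an `h × s` generator matrix over `GF(2)` with a typing of its
columns by edge types. -/
structure CNType (n : ℕ) where
  h : ℕ
  s : ℕ
  G : Matrix (Fin h) (Fin s) (ZMod 2)
  τ : Fin s → Fin n

/-- The variable-node side of a MET D-GLDPC ensemble. -/
structure VNSide (n : ℕ) where
  nV : ℕ
  vn : Fin nV → VNType n
  lam : Fin nV → Fin n → ℝ
  lam_nonneg : ∀ γ l, 0 ≤ lam γ l
  lam_sum : ∀ l, ∑ γ, lam γ l = 1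
  lam_pos_iff : ∀ γ l, 0 < lam γ l ↔ 0 < colCount (vn γ).τ l

/-- The check-node side of a MET D-GLDPC ensemble. -/
structure CNSide (n : ℕ) where
  nC : ℕ
  cn : Fin nC → CNType n
  rho : Fin nC → Fin n → ℝ
  rho_nonneg : ∀ δ l, 0 ≤ rho δ l
  rho_sum : ∀ l, ∑ δ, rho δ l = 1
  rho_pos_iff : ∀ δ l, 0 < rho δ l ↔ 0 < colCount (cn δ).τ l

/-- A MET D-GLDPC ensemble. -/
structure Ensemble (n : ℕ) extends VNSide n, CNSide n

/-- All VN local codes have full-rank generator matrix and minimum distance at least 2. -/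
def VNSide.Good {n : ℕ} (V : VNSide n) : Prop :=
  ∀ γ, ((V.vn γ).G).rank = (V.vn γ).k ∧ HasMinDistGE2 (V.vn γ).G

/-- All CN local codes have full-rank generator matrix and minimum distance at least 2. -/
def CNSide.Good {n : ℕ} (C : CNSide n) : Prop :=
  ∀ δ, ((C.cn δ).G).rank = (C.cn δ).h ∧ HasMinDistGE2 (C.cn δ).G

/-- The matrix `P(ε)` with entries `P^{l,m}(ε)`. -/
def Pmat {n : ℕ} (V : VNSide n) (ε : ℝ) : Matrix (Fin n) (Fin n) ℝ :=
  Matrix.of fun l m =>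
    ∑ γ, if HasMinDistEq2 (V.vn γ).G then
      (V.lam γ l / (colCount (V.vn γ).τ l : ℝ)) *
        ∑ u ∈ Finset.Icc 1 (V.vn γ).k, (chi2 (V.vn γ).G (V.vn γ).τ u l m : ℝ) * ε ^ u
    else 0

/-- The matrix `C` with entries `C^{l,m}`. -/
def Cmat {n : ℕ} (C : CNSide n) : Matrix (Fin n) (Fin n) ℝ :=
  Matrix.of fun l m =>
    ∑ δ, if HasMinDistEq2 (C.cn δ).G then
      (C.rho δ l / (colCount (C.cn δ).τ l : ℝ)) * (xi2 (C.cn δ).G (C.cn δ).τ l m : ℝ)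
    else 0

/-- Aggregate VN EXIT function `I_{EV,e}(I,ε)`. -/
def IEVagg {n : ℕ} (V : VNSide n) (e : Fin n) (I : Fin n → ℝ) (ε : ℝ) : ℝ :=
  ∑ γ ∈ Finset.univ.filter (fun γ => 0 < V.lam γ e),
    V.lam γ e * IEV (V.vn γ).G (V.vn γ).τ e I ε

/-- Aggregate CN EXIT function `I_{EC,e}(I)`. -/
def IECagg {n : ℕ} (C : CNSide n) (e : Fin n) (I : Fin n → ℝ) : ℝ :=
  ∑ δ ∈ Finset.univ.filter (fun δ => 0 < C.rho δ e),
    C.rho δ e * IEC (C.cn δ).G (C.cn δ).τ e I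

/-- The EXIT recursion `f(·,ε)`. -/
def exitMap {n : ℕ} (E : Ensemble n) (ε : ℝ) (I : Fin n → ℝ) : Fin n → ℝ :=
  fun e => IEVagg E.toVNSide e (fun m => IECagg E.toCNSide m I) ε

/-- Local stability of the fixed point `1` of the EXIT recursion. -/
def LocallyStable {n : ℕ} (E : Ensemble n) (ε : ℝ) : Prop :=
  ∃ U : Set (Fin n → ℝ), IsOpen U ∧ (fun _ => (1 : ℝ)) ∈ U ∧
    ∀ I ∈ U ∩ Set.Icc (fun _ => (0 : ℝ)) (fun _ => (1 : ℝ)),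
      Filter.Tendsto (fun m => (exitMap E ε)^[m] I) Filter.atTop (nhds fun _ => (1 : ℝ))

/-- Spectral radius of a real square matrix: the maximum modulus of its complex
eigenvalues. -/
def specRad {m : ℕ} (A : Matrix (Fin m) (Fin m) ℝ) : ℝ :=
  (spectralRadius ℂ (A.map fun x : ℝ => (x : ℂ))).toReal



section AuxLemmas

open Matrix

lemma rank_eq_of_vecMul_inj {h : ℕ} {J : Type*} [Fintype J] [DecidableEq J]
    (M : Matrix (Fin h) J (ZMod 2))
    (hinj : Function.Injective fun x : Fin h → ZMod 2 => Matrix.vecMul x M) :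
    M.rank = h := by
  have heq : Mᵀ.mulVecLin = M.vecMulLinear := by
    ext x j
    simp [Matrix.mulVec_transpose]
  rw [← Matrix.rank_transpose, Matrix.rank, heq]
  rw [LinearMap.finrank_range_of_inj hinj, Module.finrank_fin_fun]

lemma vecMul_inj_of_rank {h s : ℕ} (G : Matrix (Fin h) (Fin s) (ZMod 2))
    (hrk : G.rank = h) :
    Function.Injective fun x : Fin h → ZMod 2 => Matrix.vecMul x G := by
  have heq : Gᵀ.mulVecLin = G.vecMulLinear := by
    ext x j
    simp [Matrix.mulVec_transpose]
  have h2 : Module.finrank (ZMod 2) (LinearMap.range G.vecMulLinear) = h := by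
    have := hrk
    rw [← Matrix.rank_transpose, Matrix.rank, heq] at this
    exact this
  have h3 := LinearMap.finrank_range_add_finrank_ker G.vecMulLinear
  rw [h2, Module.finrank_fin_fun] at h3
  have h4 : LinearMap.ker G.vecMulLinear = ⊥ :=
    Submodule.finrank_eq_zero.mp (by omega)
  exact LinearMap.ker_eq_bot.mp h4

lemma colRank_full {h s : ℕ} (G : Matrix (Fin h) (Fin s) (ZMod 2))
    (hrk : G.rank = h) (hmd : HasMinDistGE2 G) (A : Finset (Fin s))
    (hA : Aᶜ.card ≤ 1) : colRank G A ∅ = h := by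
  classical
  apply rank_eq_of_vecMul_inj
  set M := (Matrix.of fun (i : Fin h) (j : {x // x ∈ A} ⊕ {x // x ∈ (∅ : Finset (Fin h))}) =>
    Sum.elim (fun a => G i a.1) (fun t => if i = t.1 then (1 : ZMod 2) else 0) j) with hM
  have hlin : (fun x : Fin h → ZMod 2 => Matrix.vecMul x M) = M.vecMulLinear := rfl
  rw [hlin, ← LinearMap.ker_eq_bot, LinearMap.ker_eq_bot']
  intro x hx
  have hz : ∀ a ∈ A, Matrix.vecMul x G a = 0 := by
    intro a ha
    have := congr_fun hx (Sum.inl ⟨a, ha⟩)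
    simpa [hM, Matrix.vecMul, dotProduct] using this
  have hGz : Matrix.vecMul x G = 0 := by
    by_contra hne
    have h2 := hmd x hne
    have hsub : (Finset.univ.filter fun j => Matrix.vecMul x G j ≠ 0) ⊆ Aᶜ := by
      intro j hj
      simp only [Finset.mem_filter] at hj
      simp only [Finset.mem_compl]
      intro hjA
      exact hj.2 (hz j hjA)
    have := (Finset.card_le_card hsub).trans hA
    unfold hWeight at h2
    omega
  have hinj := vecMul_inj_of_rank G hrk
  apply hinj
  simp [hGz, Matrix.zero_vecMul]

lemma filter_full {n s : ℕ} (τ : Fin s → Fin n) :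
    (Finset.univ.filter fun A : Finset (Fin s) =>
      ∀ l, (A.filter fun j => τ j = l).card = colCount τ l) = {Finset.univ} := by
  ext A
  simp only [Finset.mem_filter, Finset.mem_univ, true_and, Finset.mem_singleton]
  constructor
  · intro hA
    apply Finset.eq_univ_iff_forall.mpr
    intro j
    have hsub : (A.filter fun i => τ i = τ j) ⊆ (Finset.univ.filter fun i => τ i = τ j) :=
      Finset.filter_subset_filter _ (Finset.subset_univ A)
    have hcard : (Finset.univ.filter fun i => τ i = τ j).card ≤
        (A.filter fun i => τ i = τ j).card := by
      rw [hA (τ j)]; rfl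
    have heq := Finset.eq_of_subset_of_card_le hsub hcard
    have : j ∈ (A.filter fun i => τ i = τ j) := by
      rw [heq]; simp
    exact (Finset.mem_filter.mp this).1
  · rintro rfl
    intro l; rfl

lemma filter_minus {n s : ℕ} (τ : Fin s → Fin n) (e : Fin n) (he : 0 < colCount τ e) :
    (Finset.univ.filter fun A : Finset (Fin s) =>
      ∀ l, (A.filter fun j => τ j = l).card = colCount τ l - 0 - (if l = e then 1 else 0))
    = (Finset.univ.filter fun j => τ j = e).image (fun j => Finset.univ.erase j) := by
  have hsum : ∑ l, colCount τ l = s := by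
    have := Finset.card_eq_sum_card_fiberwise
      (f := τ) (s := (Finset.univ : Finset (Fin s))) (t := Finset.univ)
      (fun x _ => Finset.mem_univ (τ x))
    simpa [colCount] using this.symm
  ext A
  simp only [Finset.mem_filter, Finset.mem_univ, true_and, Finset.mem_image, Nat.sub_zero]
  constructor
  · intro hA
    have hAe := hA e
    simp only [if_pos rfl] at hAe
    have hex : ∃ j, τ j = e ∧ j ∉ A := by
      by_contra hc
      push_neg at hc
      have hsub : (Finset.univ.filter fun i => τ i = e) ⊆ (A.filter fun i => τ i = e) := by
        intro x hx
        have hxe := (Finset.mem_filter.mp hx).2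
        exact Finset.mem_filter.mpr ⟨hc x hxe, hxe⟩
      have := Finset.card_le_card hsub
      have h1 : colCount τ e ≤ colCount τ e - 1 := by
        calc colCount τ e ≤ (A.filter fun i => τ i = e).card := this
        _ = colCount τ e - 1 := hAe
      omega
    obtain ⟨j, hje, hjA⟩ := hex
    refine ⟨j, by simpa using hje, ?_⟩
    have hsub : A ⊆ Finset.univ.erase j := by
      intro a ha
      exact Finset.mem_erase.mpr ⟨fun h => hjA (h ▸ ha), Finset.mem_univ a⟩
    have hcardA : A.card = s - 1 := by
      have h1 := Finset.card_eq_sum_card_fiberwise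
        (f := τ) (s := A) (t := Finset.univ) (fun x _ => Finset.mem_univ (τ x))
      have h2 : ∀ l, (A.filter fun a => τ a = l).card + (if l = e then 1 else 0)
          = colCount τ l := by
        intro l
        by_cases hl : l = e
        · subst hl
          have h1' : (if l = l then 1 else 0) = 1 := if_pos rfl
          rw [hA l, h1']
          omega
        · rw [hA l]
          simp [hl]
      have h3 : ∑ l, ((A.filter fun a => τ a = l).card + (if l = e then 1 else 0))
          = ∑ l, colCount τ l := Finset.sum_congr rfl (fun l _ => h2 l)
      rw [Finset.sum_add_distrib, Finset.sum_ite_eq' Finset.univ e (fun _ => 1)] at h3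
      simp only [Finset.mem_univ, if_pos] at h3
      omega
    have hcerase : (Finset.univ.erase j).card = s - 1 := by
      rw [Finset.card_erase_of_mem (Finset.mem_univ j)]
      simp
    exact (Finset.eq_of_subset_of_card_le hsub (by omega)).symm
  · rintro ⟨j, hj, rfl⟩
    intro l
    rw [Finset.filter_erase]
    by_cases hl : l = e
    · subst hl
      have hjmem : j ∈ Finset.univ.filter fun i => τ i = l := by
        simp [hj]
      rw [Finset.card_erase_of_mem hjmem]
      simp [colCount]
    · have hjnot : j ∉ Finset.univ.filter fun i => τ i = l := by
        simp [hj, Ne.symm hl]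
      rw [Finset.erase_eq_of_notMem hjnot]
      simp [colCount, hl]

lemma eTildeC_full {n h s : ℕ} (G : Matrix (Fin h) (Fin s) (ZMod 2)) (τ : Fin s → Fin n)
    (hrk : G.rank = h) (hmd : HasMinDistGE2 G) :
    eTildeC G τ (colCount τ) = h := by
  unfold eTildeC
  rw [filter_full, Finset.sum_singleton]
  apply colRank_full G hrk hmd
  simp

lemma eTildeC_minus {n h s : ℕ} (G : Matrix (Fin h) (Fin s) (ZMod 2)) (τ : Fin s → Fin n)
    (hrk : G.rank = h) (hmd : HasMinDistGE2 G) (e : Fin n) (he : 0 < colCount τ e) :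
    eTildeC G τ (fun l => colCount τ l - 0 - (if l = e then 1 else 0))
      = colCount τ e * h := by
  unfold eTildeC
  rw [filter_minus τ e he]
  rw [Finset.sum_image (by
    intro x _ y _ hxy
    by_contra hne
    have hx : x ∈ Finset.univ.erase y := Finset.mem_erase.mpr ⟨hne, Finset.mem_univ x⟩
    rw [← (id hxy : Finset.univ.erase x = Finset.univ.erase y)] at hx
    exact (Finset.mem_erase.mp hx).1 rfl)]
  have hterm : ∀ j ∈ Finset.univ.filter (fun j => τ j = e),
      colRank G (Finset.univ.erase j) ∅ = h := by
    intro j _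
    apply colRank_full G hrk hmd
    have : (Finset.univ.erase j)ᶜ = {j} := by
      ext x
      simp [Finset.mem_erase, eq_comm, or_comm]
    rw [this]
    simp
  rw [Finset.sum_congr rfl hterm, Finset.sum_const, smul_eq_mul]
  rfl

end AuxLemmas

/-- **CN EXIT function tends to 1 at the all-ones point.** For a CN type with full-rank
generator matrix whose local code has minimum distance at least `2`,
`I_{EC,e}^{(δ)}(I) → 1` as `I → (1,…,1)`; equivalently, `I_{EC,e}^{(δ)}((1,…,1)) = 1`. -/
theorem IEC_tendsto_one {n h s : ℕ} (hn : 1 ≤ n)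
    (G : Matrix (Fin h) (Fin s) (ZMod 2)) (τ : Fin s → Fin n)
    (hrk : G.rank = h) (hmd : HasMinDistGE2 G)
    (e : Fin n) (he : 0 < colCount τ e) :
    Filter.Tendsto (fun I : Fin n → ℝ => IEC G τ e I)
      (nhds fun _ => (1 : ℝ)) (nhds 1) ∧
    IEC G τ e (fun _ => 1) = 1 := by
  classical
  have haCN0 : aCN G τ e (fun _ => 0) = 0 := by
    unfold aCN
    have h1 : (fun l => colCount τ l - (fun _ : Fin n => 0) l) = colCount τ := by
      funext l; simp
    have h2 : (fun l => colCount τ l - (fun _ : Fin n => 0) l - (if l = e then 1 else 0))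
        = (fun l => colCount τ l - 0 - (if l = e then 1 else 0)) := by
      funext l; simp
    rw [h1, h2, eTildeC_full G τ hrk hmd, eTildeC_minus G τ hrk hmd e he]
    simp only [Nat.sub_zero]
    push_cast
    ring
  have hzero : (fun _ : Fin n => (0 : ℕ)) ∈ tRange (colCount τ) e := by
    unfold tRange
    rw [Fintype.mem_piFinset]
    intro l
    rw [Finset.mem_range]
    split
    · next hl => rw [hl]; exact he
    · omega
  have hsum0 : (∑ t ∈ tRange (colCount τ) e,
      (∏ l, (1 - (fun _ : Fin n => (1:ℝ)) l) ^ t l *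
        ((fun _ : Fin n => (1:ℝ)) l) ^ (colCount τ l - t l - (if l = e then 1 else 0))) *
        aCN G τ e t) = 0 := by
    have hstep : (∑ t ∈ tRange (colCount τ) e,
        (∏ l, (1 - (fun _ : Fin n => (1:ℝ)) l) ^ t l *
          ((fun _ : Fin n => (1:ℝ)) l) ^ (colCount τ l - t l - (if l = e then 1 else 0))) *
          aCN G τ e t) = aCN G τ e (fun _ => 0) := by
      rw [Finset.sum_eq_single_of_mem _ hzero]
      · simp
      · intro t _ hne
        have hex : ∃ l, t l ≠ 0 := by
          by_contra hc
          push_neg at hc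
          exact hne (funext fun l => hc l)
        obtain ⟨l0, hl0⟩ := hex
        apply mul_eq_zero_of_left
        apply Finset.prod_eq_zero (Finset.mem_univ l0)
        simp [zero_pow hl0]
    rw [hstep, haCN0]
  have hval : IEC G τ e (fun _ => 1) = 1 := by
    unfold IEC
    rw [hsum0, mul_zero, sub_zero]
  have hc : Continuous fun I : Fin n → ℝ => IEC G τ e I := by
    unfold IEC
    apply Continuous.sub continuous_const
    apply Continuous.mul continuous_const
    apply continuous_finset_sum
    intro t _
    apply Continuous.mul ?_ continuous_const
    apply continuous_finset_prod
    intro l _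
    exact ((continuous_const.sub (continuous_apply l)).pow _).mul ((continuous_apply l).pow _)
  refine ⟨?_, hval⟩
  have ht := hc.tendsto (fun _ => 1)
  rwa [hval] at ht

end MET
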